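/- arXiv:math/0602643 — 3 statements merged into one kernel-verified Lean document; each statement's English description precedes it below -/
import Mathlib

section
/- (Corollary 3.2.) Let 0 = x₀ < ⋯ < x_{n+1} = 1 be a grid, ε, b, c reals, f : [0,1] → ℝ continuous, A = (a(φⱼ, φᵢ))_{1≤i,j≤n} invertible, and Uⁿ ∈ ℝⁿ the solution of A·Uⁿ = F with Fⱼ = ∫₀¹ f·φⱼ. Fix 2 ≤ k ≤ n. Let S = {s₁ < ⋯ < s_m} ⊂ (x_{k−1}, x_k) and S' = {s'₁ < ⋯ < s'_{m'}} ⊂ (x_{k−1}, x_k) be two finite sets of added points, with corresponding refined Galerkin solutions having nodal values (u₁, …, uₙ) and (u'₁, …, u'ₙ) at x₁, …, xₙ. Fix i ∈ {2, …, n} with i ≠ k and assume (Uⁿ_{i−1} − u_{i−1})(Uⁿᵢ − uᵢ) < 0 and (Uⁿ_{i−1} − u'_{i−1})(Uⁿᵢ − u'ᵢ) < 0. Then the unique intersection point in (x_{i−1}, xᵢ) of the affine interpolants of Uⁿ and of (u_{i−1}, uᵢ) coincides with the unique intersection point of the affine interpolants of Uⁿ and of (u'_{i−1}, u'ᵢ);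 i.e. the intersection in (x_{i−1}, xᵢ) is independent of m and of the distribution of the added points in (x_{k−1}, x_k). -/
open Matrix MeasureTheory

/-- The hat (tent) function with support `[l, r]`, peak value 1 at `m`,
equal to `(t - l)/(m - l)` on `[l, m]` and `(r - t)/(r - m)` on `[m, r]`. -/
noncomputable def hat3 (l m r t : ℝ) : ℝ :=
  if l ≤ t ∧ t ≤ m then (t - l) / (m - l)
  else if m ≤ t ∧ t ≤ r then (r - t) / (r - m)
  else 0

/-- The piecewise derivative of `hat3 l m r`. -/
noncomputable def hat3D (l m r t : ℝ) : ℝ :=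
  if l < t ∧ t < m then 1 / (m - l)
  else if m < t ∧ t < r then -(1 / (r - m))
  else 0

/-- The hat function at node `i` of the grid `y`. -/
noncomputable def hatFn (y : ℕ → ℝ) (i : ℕ) : ℝ → ℝ :=
  hat3 (y (i - 1)) (y i) (y (i + 1))

/-- The piecewise derivative of the hat function at node `i` of the grid `y`. -/
noncomputable def hatDeriv (y : ℕ → ℝ) (i : ℕ) : ℝ → ℝ :=
  hat3D (y (i - 1)) (y i) (y (i + 1))

/-- The bilinear form `a(u, v) = ε∫₀¹ u'v' + b∫₀¹ u v' + c∫₀¹ u v`, where the (piecewise)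
derivatives `u'`, `v'` are supplied explicitly as `uD`, `vD`. -/
noncomputable def bform (ε b c : ℝ) (u uD v vD : ℝ → ℝ) : ℝ :=
  ε * (∫ t in (0:ℝ)..1, uD t * vD t)
    + b * (∫ t in (0:ℝ)..1, u t * vD t)
    + c * (∫ t in (0:ℝ)..1, u t * v t)

/-- `y` is a grid `0 = y₀ < y₁ < ⋯ < y_{N+1} = 1` with `N` interior nodes. -/
def IsGrid (y : ℕ → ℝ) (N : ℕ) : Prop :=
  y 0 = 0 ∧ y (N + 1) = 1 ∧ ∀ i ≤ N, y i < y (i + 1)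

/-- The load `∫₀¹ f·φⱼ` for the grid `y`. -/
noncomputable def load (f : ℝ → ℝ) (y : ℕ → ℝ) (j : ℕ) : ℝ :=
  ∫ t in (0:ℝ)..1, f t * hatFn y j t

/-- `w` (as coefficients at the interior nodes `y 1, …, y N`) is a Galerkin finite element
solution on the grid `y`: its `a`-pairing with every nodal basis hat function equals the
corresponding load. -/
def IsGalerkinSol (ε b c : ℝ) (f : ℝ → ℝ) (y : ℕ → ℝ) (N : ℕ) (w : ℕ → ℝ) : Prop :=
  ∀ j, 1 ≤ j → j ≤ N →
    (∑ i ∈ Finset.Icc 1 N,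
        w i * bform ε b c (hatFn y i) (hatDeriv y i) (hatFn y j) (hatDeriv y j))
      = load f y j

/-- The stiffness matrix `A` with `A i j = a(φ_{j+1}, φ_{i+1})` (`0`-based `Fin` indices
corresponding to the interior nodes `y 1, …, y n`). -/
noncomputable def stiff (ε b c : ℝ) (y : ℕ → ℝ) (n : ℕ) : Matrix (Fin n) (Fin n) ℝ :=
  fun i j => bform ε b c (hatFn y ((j : ℕ) + 1)) (hatDeriv y ((j : ℕ) + 1))
      (hatFn y ((i : ℕ) + 1)) (hatDeriv y ((i : ℕ) + 1))

/-- The affine function on `[α, β]` through `(α, ya)` and `(β, yb)`. -/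
noncomputable def affInterp (α β ya yb t : ℝ) : ℝ :=
  ya + (yb - ya) * (t - α) / (β - α)

/- ===== auxiliary lemmas ===== -/

lemma hat3_zero_of_ge {l m r t : ℝ} (hlm : l ≤ m) (ht : t ≤ l) : hat3 l m r t = 0 := by
  unfold hat3
  split_ifs with h1 h2
  · have : t = l := le_antisymm ht h1.1
    simp [this]
  · exfalso
    have h3 : l ≤ t := le_trans hlm h2.1
    have h4 : t = l := le_antisymm ht h3
    exact h1 ⟨le_of_eq h4.symm, le_trans ht hlm⟩
  · rfl

lemma hat3_zero_of_le {l m r t : ℝ} (hmr : m < r) (ht : r ≤ t) : hat3 l m r t = 0 := by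
  unfold hat3
  split_ifs with h1 h2
  · exfalso; linarith [h1.2]
  · have : t = r := le_antisymm h2.2 ht
    simp [this]
  · rfl

lemma hat3D_zero_of_ge {l m r t : ℝ} (hlm : l ≤ m) (ht : t ≤ l) : hat3D l m r t = 0 := by
  unfold hat3D
  split_ifs with h1 h2
  · exfalso; linarith [h1.1]
  · exfalso; linarith [h2.1]
  · rfl

lemma hat3D_zero_of_le {l m r t : ℝ} (hmr : m ≤ r) (ht : r ≤ t) : hat3D l m r t = 0 := by
  unfold hat3D
  split_ifs with h1 h2
  · exfalso; linarith [h1.2]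
  · exfalso; linarith [h2.2]
  · rfl

lemma hat3_eq_left {l m r r' t : ℝ} (hlm : l ≤ m) (ht : t ≤ m) :
    hat3 l m r t = hat3 l m r' t := by
  unfold hat3
  by_cases hc : l ≤ t ∧ t ≤ m
  · rw [if_pos hc, if_pos hc]
  · have hm : ¬ m ≤ t := fun hm => hc ⟨le_trans hlm hm, ht⟩
    rw [if_neg hc, if_neg hc, if_neg (fun h => hm h.1), if_neg (fun h => hm h.1)]

lemma hat3D_eq_left {l m r r' t : ℝ} (ht : t ≤ m) :
    hat3D l m r t = hat3D l m r' t := by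
  unfold hat3D
  have hm : ¬ m < t := not_lt.2 ht
  by_cases hc : l < t ∧ t < m
  · rw [if_pos hc, if_pos hc]
  · rw [if_neg hc, if_neg hc, if_neg (fun h => hm h.1), if_neg (fun h => hm h.1)]

lemma hat3_eq_right {l l' m r t : ℝ} (hl : l < m) (hl' : l' < m) (ht : m ≤ t) :
    hat3 l m r t = hat3 l' m r t := by
  unfold hat3
  rcases eq_or_lt_of_le ht with h | h
  · subst h
    rw [if_pos ⟨le_of_lt hl, le_rfl⟩, if_pos ⟨le_of_lt hl', le_rfl⟩,
      div_self (sub_ne_zero.2 (ne_of_gt hl)), div_self (sub_ne_zero.2 (ne_of_gt hl'))]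
  · rw [if_neg (fun hc : _ ∧ t ≤ m => absurd hc.2 (not_le.2 h)),
      if_neg (fun hc : _ ∧ t ≤ m => absurd hc.2 (not_le.2 h))]

lemma hat3D_eq_right {l l' m r t : ℝ} (ht : m ≤ t) :
    hat3D l m r t = hat3D l' m r t := by
  unfold hat3D
  have hm : ¬ t < m := not_lt.2 ht
  rw [if_neg (fun hc : _ ∧ t < m => hm hc.2), if_neg (fun hc : _ ∧ t < m => hm hc.2)]

lemma hat_pair_zero (z : ℕ → ℝ) (p q : ℕ)
    (h1 : z p < z (p + 1)) (h2 : z (q - 1) ≤ z q) (h3 : z (p + 1) ≤ z (q - 1)) (t : ℝ) :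
    (hatFn z p t = 0 ∧ hatDeriv z p t = 0) ∨ (hatFn z q t = 0 ∧ hatDeriv z q t = 0) := by
  rcases le_total t (z (q - 1)) with ht | ht
  · right
    exact ⟨hat3_zero_of_ge h2 ht, hat3D_zero_of_ge h2 ht⟩
  · left
    have ht' : z (p + 1) ≤ t := le_trans h3 ht
    exact ⟨hat3_zero_of_le h1 ht', hat3D_zero_of_le (le_of_lt h1) ht'⟩

lemma iint_zero {g : ℝ → ℝ} (h : ∀ t, g t = 0) : (∫ t in (0:ℝ)..1, g t) = 0 := by
  have hg : g = fun _ => 0 := funext h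
  rw [hg]; simp

lemma iint_congr {g h : ℝ → ℝ} (he : ∀ t, g t = h t) :
    (∫ t in (0:ℝ)..1, g t) = ∫ t in (0:ℝ)..1, h t := by
  rw [funext he]

lemma bform_zero_of_pair {ε b c : ℝ} {u uD v vD : ℝ → ℝ}
    (h : ∀ t, (u t = 0 ∧ uD t = 0) ∨ (v t = 0 ∧ vD t = 0)) :
    bform ε b c u uD v vD = 0 := by
  unfold bform
  rw [iint_zero (g := fun t => uD t * vD t)
      (fun t => by rcases h t with ⟨_, h'⟩ | ⟨_, h'⟩ <;> simp [h']),
    iint_zero (g := fun t => u t * vD t)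
      (fun t => by rcases h t with ⟨h', _⟩ | ⟨_, h'⟩ <;> simp [h']),
    iint_zero (g := fun t => u t * v t)
      (fun t => by rcases h t with ⟨h', _⟩ | ⟨h', _⟩ <;> simp [h'])]
  ring

lemma bform_tri₁ (ε b c : ℝ) (z : ℕ → ℝ) (p q : ℕ)
    (h1 : z p < z (p + 1)) (h2 : z (q - 1) ≤ z q) (h3 : z (p + 1) ≤ z (q - 1)) :
    bform ε b c (hatFn z p) (hatDeriv z p) (hatFn z q) (hatDeriv z q) = 0 :=
  bform_zero_of_pair (hat_pair_zero z p q h1 h2 h3)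

lemma bform_tri₂ (ε b c : ℝ) (z : ℕ → ℝ) (p q : ℕ)
    (h1 : z p < z (p + 1)) (h2 : z (q - 1) ≤ z q) (h3 : z (p + 1) ≤ z (q - 1)) :
    bform ε b c (hatFn z q) (hatDeriv z q) (hatFn z p) (hatDeriv z p) = 0 :=
  bform_zero_of_pair (fun t => (hat_pair_zero z p q h1 h2 h3 t).symm)

lemma grid_mono {y : ℕ → ℝ} {N : ℕ} (h : ∀ i ≤ N, y i < y (i + 1)) :
    ∀ a b, a ≤ b → b ≤ N + 1 → y a ≤ y b := by
  intro a b hab hbN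
  induction b with
  | zero => simp_all
  | succ n ih =>
    rcases Nat.lt_or_ge a (n + 1) with h' | h'
    · exact le_trans (ih (Nat.lt_succ_iff.1 h') (by omega)) (le_of_lt (h n (by omega)))
    · have : a = n + 1 := le_antisymm hab h'
      simp [this]

lemma bform_congr_ptwise {ε b c : ℝ} {u uD u' uD' v vD : ℝ → ℝ}
    (h : ∀ t, (u t = u' t ∧ uD t = uD' t) ∨ (v t = 0 ∧ vD t = 0)) :
    bform ε b c u uD v vD = bform ε b c u' uD' v vD := by
  unfold bform
  rw [iint_congr (g := fun t => uD t * vD t) (h := fun t => uD' t * vD t)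
      (fun t => by rcases h t with ⟨e1, e2⟩ | ⟨e1, e2⟩ <;> simp [e1, e2]),
    iint_congr (g := fun t => u t * vD t) (h := fun t => u' t * vD t)
      (fun t => by rcases h t with ⟨e1, e2⟩ | ⟨e1, e2⟩ <;> simp [e1, e2]),
    iint_congr (g := fun t => u t * v t) (h := fun t => u' t * v t)
      (fun t => by rcases h t with ⟨e1, e2⟩ | ⟨e1, e2⟩ <;> simp [e1, e2])]

lemma hatFn_congr {y x : ℕ → ℝ} {a b : ℕ} (h1 : y (a - 1) = x (b - 1)) (h2 : y a = x b)
    (h3 : y (a + 1) = x (b + 1)) : hatFn y a = hatFn x b := by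
  unfold hatFn; rw [h1, h2, h3]

lemma hatDeriv_congr {y x : ℕ → ℝ} {a b : ℕ} (h1 : y (a - 1) = x (b - 1)) (h2 : y a = x b)
    (h3 : y (a + 1) = x (b + 1)) : hatDeriv y a = hatDeriv x b := by
  unfold hatDeriv; rw [h1, h2, h3]

lemma sum_Icc_one_eq_fin (N : ℕ) (F : ℕ → ℝ) :
    ∑ i ∈ Finset.Icc 1 N, F i = ∑ c : Fin N, F ((c : ℕ) + 1) := by
  rw [Fin.sum_univ_eq_sum_range (fun i => F (i + 1)) N, ← Finset.Ico_add_one_right_eq_Icc,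
    Finset.sum_Ico_eq_sum_range]
  simp [add_comm]

lemma sum_Icc_shift (a b m : ℕ) (F : ℕ → ℝ) :
    ∑ i ∈ Finset.Icc (a + m) (b + m), F (i - m) = ∑ c ∈ Finset.Icc a b, F c := by
  rw [← Finset.map_add_right_Icc, Finset.sum_map]
  simp
section Beq

variable (ε b c : ℝ) (x y : ℕ → ℝ) (n m k : ℕ)

lemma bform_left_eq (hk2 : 2 ≤ k) (hkn : k ≤ n)
    (hx : ∀ i ≤ n, x i < x (i + 1))
    (hagreeL : ∀ i ≤ k - 1, y i = x i)
    (i j : ℕ) (hi1 : 1 ≤ i) (hik : i ≤ k - 1) (hj1 : 1 ≤ j) (hjk : j ≤ k - 2) :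
    bform ε b c (hatFn y i) (hatDeriv y i) (hatFn y j) (hatDeriv y j)
      = bform ε b c (hatFn x i) (hatDeriv x i) (hatFn x j) (hatDeriv x j) := by
  have gx := grid_mono hx
  have hj : hatFn y j = hatFn x j :=
    hatFn_congr (hagreeL _ (by omega)) (hagreeL _ (by omega)) (hagreeL _ (by omega))
  have hjD : hatDeriv y j = hatDeriv x j :=
    hatDeriv_congr (hagreeL _ (by omega)) (hagreeL _ (by omega)) (hagreeL _ (by omega))
  rw [hj, hjD]
  rcases Nat.lt_or_ge i (k - 1) with hlt | hge
  · rw [hatFn_congr (hagreeL _ (by omega)) (hagreeL _ (by omega)) (hagreeL _ (by omega)),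
      hatDeriv_congr (y := y) (x := x) (a := i) (b := i)
        (hagreeL _ (by omega)) (hagreeL _ (by omega)) (hagreeL _ (by omega))]
  · have hieq : i = k - 1 := by omega
    subst hieq
    apply bform_congr_ptwise
    intro t
    rcases le_total t (x (k - 1)) with ht | ht
    · left
      constructor
      · show hatFn y (k - 1) t = hatFn x (k - 1) t
        unfold hatFn
        rw [hagreeL (k - 1 - 1) (by omega), hagreeL (k - 1) le_rfl]
        exact hat3_eq_left (gx (k - 1 - 1) (k - 1) (by omega) (by omega)) ht
      · show hatDeriv y (k - 1) t = hatDeriv x (k - 1) t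
        unfold hatDeriv
        rw [hagreeL (k - 1 - 1) (by omega), hagreeL (k - 1) le_rfl]
        exact hat3D_eq_left ht
    · right
      have ht' : x (j + 1) ≤ t := le_trans (gx (j + 1) (k - 1) (by omega) (by omega)) ht
      exact ⟨hat3_zero_of_le (hx j (by omega)) ht',
        hat3D_zero_of_le (le_of_lt (hx j (by omega))) ht'⟩

lemma bform_right_eq (hk2 : 2 ≤ k) (hkn : k ≤ n)
    (hx : ∀ i ≤ n, x i < x (i + 1)) (hy : ∀ i ≤ n + m, y i < y (i + 1))
    (hagreeR : ∀ i, k ≤ i → i ≤ n + 1 → y (i + m) = x i)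
    (i j : ℕ) (hki : k ≤ i) (hin : i ≤ n) (hkj : k + 1 ≤ j) (hjn : j ≤ n) :
    bform ε b c (hatFn y (i + m)) (hatDeriv y (i + m)) (hatFn y (j + m)) (hatDeriv y (j + m))
      = bform ε b c (hatFn x i) (hatDeriv x i) (hatFn x j) (hatDeriv x j) := by
  have gx := grid_mono hx
  have e1 : y (j + m - 1) = x (j - 1) := by
    rw [show j + m - 1 = (j - 1) + m by omega]; exact hagreeR (j - 1) (by omega) (by omega)
  have e2 : y (j + m) = x j := hagreeR j (by omega) (by omega)
  have e3 : y (j + m + 1) = x (j + 1) := by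
    rw [show j + m + 1 = (j + 1) + m by omega]; exact hagreeR (j + 1) (by omega) (by omega)
  have hj : hatFn y (j + m) = hatFn x j := hatFn_congr e1 e2 e3
  have hjD : hatDeriv y (j + m) = hatDeriv x j := hatDeriv_congr e1 e2 e3
  rw [hj, hjD]
  rcases Nat.lt_or_ge k i with hlt | hge
  · have f1 : y (i + m - 1) = x (i - 1) := by
      rw [show i + m - 1 = (i - 1) + m by omega]; exact hagreeR (i - 1) (by omega) (by omega)
    have f2 : y (i + m) = x i := hagreeR i (by omega) (by omega)
    have f3 : y (i + m + 1) = x (i + 1) := by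
      rw [show i + m + 1 = (i + 1) + m by omega]; exact hagreeR (i + 1) (by omega) (by omega)
    rw [hatFn_congr f1 f2 f3, hatDeriv_congr f1 f2 f3]
  · have hieq : i = k := by omega
    subst hieq
    have f2 : y (i + m) = x i := hagreeR i (by omega) (by omega)
    have f3 : y (i + m + 1) = x (i + 1) := by
      rw [show i + m + 1 = (i + 1) + m by omega]; exact hagreeR (i + 1) (by omega) (by omega)
    apply bform_congr_ptwise
    intro t
    rcases le_total (x i) t with ht | ht
    · left
      have hl : y (i + m - 1) < x i := by
        have h := hy (i + m - 1) (by omega)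
        rw [show i + m - 1 + 1 = i + m by omega, f2] at h
        exact h
      constructor
      · show hatFn y (i + m) t = hatFn x i t
        unfold hatFn
        rw [f2, f3]
        have hx' : x (i - 1) < x i := by
          have h := hx (i - 1) (by omega)
          rw [show i - 1 + 1 = i by omega] at h
          exact h
        exact hat3_eq_right hl hx' ht
      · show hatDeriv y (i + m) t = hatDeriv x i t
        unfold hatDeriv
        rw [f2, f3]
        exact hat3D_eq_right ht
    · right
      have ht' : t ≤ x (j - 1) := le_trans ht (gx i (j - 1) (by omega) (by omega))
      have hlm : x (j - 1) ≤ x j := gx (j - 1) j (by omega) (by omega)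
      exact ⟨hat3_zero_of_ge hlm ht', hat3D_zero_of_ge hlm ht'⟩

end Beq

lemma transfer (ε b c : ℝ) (f : ℝ → ℝ) (x y : ℕ → ℝ) (n m k : ℕ)
    (hm : 1 ≤ m) (hk2 : 2 ≤ k) (hkn : k ≤ n)
    (hx : ∀ i ≤ n, x i < x (i + 1)) (hy : ∀ i ≤ n + m, y i < y (i + 1))
    (hagreeL : ∀ i ≤ k - 1, y i = x i)
    (hagreeR : ∀ i, k ≤ i → i ≤ n + 1 → y (i + m) = x i)
    (w uv : ℕ → ℝ)
    (hw : ∀ j, 1 ≤ j → j ≤ n + m →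
      (∑ i ∈ Finset.Icc 1 (n + m),
        w i * bform ε b c (hatFn y i) (hatDeriv y i) (hatFn y j) (hatDeriv y j)) = load f y j)
    (huv : ∀ j, uv j = if j ≤ k - 1 then w j else w (j + m))
    (j : ℕ) (hj1 : 1 ≤ j) (hjn : j ≤ n) (hjk : j ≤ k - 2 ∨ k + 1 ≤ j) :
    (∑ i ∈ Finset.Icc 1 n,
      uv i * bform ε b c (hatFn x i) (hatDeriv x i) (hatFn x j) (hatDeriv x j))
      = load f x j := by
  have gx := grid_mono hx
  have gy := grid_mono hy
  rcases hjk with hjk | hjk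
  · -- left case : j ≤ k - 2
    have hloadeq : load f y j = load f x j := by
      unfold load
      rw [hatFn_congr (y := y) (x := x) (a := j) (b := j)
        (hagreeL _ (by omega)) (hagreeL _ (by omega)) (hagreeL _ (by omega))]
    have step1 : ∑ i ∈ Finset.Icc 1 n,
        uv i * bform ε b c (hatFn x i) (hatDeriv x i) (hatFn x j) (hatDeriv x j)
        = ∑ i ∈ Finset.Icc 1 (n + m), (if i ≤ n then
            uv i * bform ε b c (hatFn x i) (hatDeriv x i) (hatFn x j) (hatDeriv x j) else 0) := by
      rw [← Finset.sum_subset (Finset.Icc_subset_Icc_right (by omega : n ≤ n + m))]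
      · apply Finset.sum_congr rfl
        intro i hi
        rw [if_pos (Finset.mem_Icc.1 hi).2]
      · intro i hbig hns
        rw [if_neg]
        intro hin
        exact hns (Finset.mem_Icc.2 ⟨(Finset.mem_Icc.1 hbig).1, hin⟩)
    have step2 : ∀ i ∈ Finset.Icc 1 (n + m),
        (if i ≤ n then
          uv i * bform ε b c (hatFn x i) (hatDeriv x i) (hatFn x j) (hatDeriv x j) else 0)
        = w i * bform ε b c (hatFn y i) (hatDeriv y i) (hatFn y j) (hatDeriv y j) := by
      intro i hi
      obtain ⟨hi1, hinm⟩ := Finset.mem_Icc.1 hi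
      by_cases h1 : i + 2 ≤ j
      · -- i ≤ j - 2
        have hBy : bform ε b c (hatFn y i) (hatDeriv y i) (hatFn y j) (hatDeriv y j) = 0 :=
          bform_tri₁ ε b c y i j (hy i (by omega))
            (le_of_lt (by have h := hy (j - 1) (by omega);
                          rwa [show j - 1 + 1 = j by omega] at h))
            (gy (i + 1) (j - 1) (by omega) (by omega))
        have hBx : bform ε b c (hatFn x i) (hatDeriv x i) (hatFn x j) (hatDeriv x j) = 0 :=
          bform_tri₁ ε b c x i j (hx i (by omega))
            (le_of_lt (by have h := hx (j - 1) (by omega);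
                          rwa [show j - 1 + 1 = j by omega] at h))
            (gx (i + 1) (j - 1) (by omega) (by omega))
        rw [hBy, hBx, if_pos (by omega : i ≤ n)]
        ring
      · by_cases h2 : j + 2 ≤ i
        · have hBy : bform ε b c (hatFn y i) (hatDeriv y i) (hatFn y j) (hatDeriv y j) = 0 :=
            bform_tri₂ ε b c y j i (hy j (by omega))
              (le_of_lt (by have h := hy (i - 1) (by omega);
                            rwa [show i - 1 + 1 = i by omega] at h))
              (gy (j + 1) (i - 1) (by omega) (by omega))
          rw [hBy, mul_zero]
          split_ifs with hin
          · have hBx : bform ε b c (hatFn x i) (hatDeriv x i) (hatFn x j) (hatDeriv x j) = 0 :=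
              bform_tri₂ ε b c x j i (hx j (by omega))
                (le_of_lt (by have h := hx (i - 1) (by omega);
                              rwa [show i - 1 + 1 = i by omega] at h))
                (gx (j + 1) (i - 1) (by omega) (by omega))
            rw [hBx, mul_zero]
          · rfl
        · -- near diagonal
          have hik : i ≤ k - 1 := by omega
          rw [if_pos (by omega : i ≤ n), huv i, if_pos hik,
            bform_left_eq ε b c x y n k hk2 hkn hx hagreeL i j hi1 hik hj1 hjk]
    rw [step1, Finset.sum_congr rfl step2, hw j hj1 (by omega), hloadeq]
  · -- right case : k + 1 ≤ j
    have e1 : y (j + m - 1) = x (j - 1) := by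
      rw [show j + m - 1 = (j - 1) + m by omega]; exact hagreeR (j - 1) (by omega) (by omega)
    have e2 : y (j + m) = x j := hagreeR j (by omega) (by omega)
    have e3 : y (j + m + 1) = x (j + 1) := by
      rw [show j + m + 1 = (j + 1) + m by omega]; exact hagreeR (j + 1) (by omega) (by omega)
    have hloadeq : load f y (j + m) = load f x j := by
      unfold load
      rw [hatFn_congr (y := y) (x := x) (a := j + m) (b := j) e1 e2 e3]
    have step0 : ∑ i ∈ Finset.Icc 1 n,
        uv i * bform ε b c (hatFn x i) (hatDeriv x i) (hatFn x j) (hatDeriv x j)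
        = ∑ i ∈ Finset.Icc k n,
          uv i * bform ε b c (hatFn x i) (hatDeriv x i) (hatFn x j) (hatDeriv x j) := by
      rw [← Finset.sum_subset (Finset.Icc_subset_Icc_left (by omega : 1 ≤ k))]
      intro i hbig hns
      obtain ⟨hi1, hin⟩ := Finset.mem_Icc.1 hbig
      have hik : i < k := by
        by_contra hc
        exact hns (Finset.mem_Icc.2 ⟨by omega, hin⟩)
      have hBx : bform ε b c (hatFn x i) (hatDeriv x i) (hatFn x j) (hatDeriv x j) = 0 :=
        bform_tri₁ ε b c x i j (hx i (by omega))
          (le_of_lt (by have h := hx (j - 1) (by omega);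
                        rwa [show j - 1 + 1 = j by omega] at h))
          (gx (i + 1) (j - 1) (by omega) (by omega))
      rw [hBx, mul_zero]
    have step1 : ∑ i ∈ Finset.Icc k n,
        uv i * bform ε b c (hatFn x i) (hatDeriv x i) (hatFn x j) (hatDeriv x j)
        = ∑ i ∈ Finset.Icc (k + m) (n + m),
          uv (i - m) * bform ε b c (hatFn x (i - m)) (hatDeriv x (i - m))
            (hatFn x j) (hatDeriv x j) := by
      exact (sum_Icc_shift k n m (fun cc => uv cc * bform ε b c (hatFn x cc) (hatDeriv x cc)
        (hatFn x j) (hatDeriv x j))).symm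
    have step2 : ∑ i ∈ Finset.Icc (k + m) (n + m),
        uv (i - m) * bform ε b c (hatFn x (i - m)) (hatDeriv x (i - m))
          (hatFn x j) (hatDeriv x j)
        = ∑ i ∈ Finset.Icc 1 (n + m), (if k + m ≤ i then
            uv (i - m) * bform ε b c (hatFn x (i - m)) (hatDeriv x (i - m))
              (hatFn x j) (hatDeriv x j) else 0) := by
      rw [← Finset.sum_subset (Finset.Icc_subset_Icc_left (by omega : 1 ≤ k + m))]
      · apply Finset.sum_congr rfl
        intro i hi
        rw [if_pos (Finset.mem_Icc.1 hi).1]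
      · intro i hbig hns
        rw [if_neg]
        intro hkm
        exact hns (Finset.mem_Icc.2 ⟨hkm, (Finset.mem_Icc.1 hbig).2⟩)
    have step3 : ∀ i ∈ Finset.Icc 1 (n + m),
        (if k + m ≤ i then
          uv (i - m) * bform ε b c (hatFn x (i - m)) (hatDeriv x (i - m))
            (hatFn x j) (hatDeriv x j) else 0)
        = w i * bform ε b c (hatFn y i) (hatDeriv y i) (hatFn y (j + m)) (hatDeriv y (j + m)) := by
      intro i hi
      obtain ⟨hi1, hinm⟩ := Finset.mem_Icc.1 hi
      by_cases h1 : i + 2 ≤ j + m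
      · have hBy : bform ε b c (hatFn y i) (hatDeriv y i)
            (hatFn y (j + m)) (hatDeriv y (j + m)) = 0 :=
          bform_tri₁ ε b c y i (j + m) (hy i (by omega))
            (le_of_lt (by have h := hy (j + m - 1) (by omega);
                          rwa [show j + m - 1 + 1 = j + m by omega] at h))
            (gy (i + 1) (j + m - 1) (by omega) (by omega))
        rw [hBy, mul_zero]
        split_ifs with hkm
        · have hBx : bform ε b c (hatFn x (i - m)) (hatDeriv x (i - m))
              (hatFn x j) (hatDeriv x j) = 0 :=
            bform_tri₁ ε b c x (i - m) j
              (by have h := hx (i - m) (by omega); exact h)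
              (le_of_lt (by have h := hx (j - 1) (by omega);
                            rwa [show j - 1 + 1 = j by omega] at h))
              (gx (i - m + 1) (j - 1) (by omega) (by omega))
          rw [hBx, mul_zero]
        · rfl
      · by_cases h2 : j + m + 2 ≤ i
        · have hBy : bform ε b c (hatFn y i) (hatDeriv y i)
              (hatFn y (j + m)) (hatDeriv y (j + m)) = 0 :=
            bform_tri₂ ε b c y (j + m) i (hy (j + m) (by omega))
              (le_of_lt (by have h := hy (i - 1) (by omega);
                            rwa [show i - 1 + 1 = i by omega] at h))
              (gy (j + m + 1) (i - 1) (by omega) (by omega))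
          have hBx : bform ε b c (hatFn x (i - m)) (hatDeriv x (i - m))
              (hatFn x j) (hatDeriv x j) = 0 :=
            bform_tri₂ ε b c x j (i - m) (hx j (by omega))
              (le_of_lt (by have h := hx (i - m - 1) (by omega);
                            rwa [show i - m - 1 + 1 = i - m by omega] at h))
              (gx (j + 1) (i - m - 1) (by omega) (by omega))
          rw [hBy, hBx, mul_zero, mul_zero, if_pos (by omega : k + m ≤ i)]
        · -- near diagonal : j + m - 1 ≤ i ≤ j + m + 1
          have hkm : k + m ≤ i := by omega
          have hceq : (i - m) + m = i := by omega
          have hBeq : bform ε b c (hatFn y i) (hatDeriv y i)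
              (hatFn y (j + m)) (hatDeriv y (j + m))
              = bform ε b c (hatFn x (i - m)) (hatDeriv x (i - m))
                (hatFn x j) (hatDeriv x j) := by
            have h := bform_right_eq ε b c x y n m k hk2 hkn hx hy hagreeR
              (i - m) j (by omega) (by omega) hjk hjn
            rwa [hceq] at h
          have hwuv : uv (i - m) = w i := by
            rw [huv (i - m), if_neg (by omega), hceq]
          rw [if_pos hkm, hwuv, hBeq]
    rw [step0, step1, step2, Finset.sum_congr rfl step3, hw (j + m) (by omega) (by omega), hloadeq]
lemma keyLA (n : ℕ) (M : Matrix (Fin n) (Fin n) ℝ) (hM : M.det ≠ 0)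
    (s T : Finset (Fin n)) (hcard : T.card = s.card + 1)
    (h0 : ∀ r ∈ s, ∀ c, c ∉ T → M r c = 0)
    (v v' : Fin n → ℝ)
    (hv : ∀ r ∈ s, (M *ᵥ v) r = 0) (hv' : ∀ r ∈ s, (M *ᵥ v') r = 0) :
    ∀ a ∈ T, ∀ b ∈ T, v a * v' b = v b * v' a := by
  classical
  set B : Matrix {r // r ∈ s} {c // c ∈ T} ℝ := Matrix.of fun r c => M r.1 c.1 with hB
  -- restriction of a vector in the kernel rows lies in ker B
  have hker : ∀ (u : Fin n → ℝ), (∀ r ∈ s, (M *ᵥ u) r = 0) →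
      B *ᵥ (fun c => u c.1) = 0 := by
    intro u hu
    funext r
    have : ∑ c : {c // c ∈ T}, M r.1 c.1 * u c.1 = ∑ c ∈ T, M r.1 c * u c := by
      rw [← Finset.sum_coe_sort T (fun c => M r.1 c * u c)]
    have hTfull : ∑ c ∈ T, M r.1 c * u c = ∑ c : Fin n, M r.1 c * u c := by
      apply Finset.sum_subset (Finset.subset_univ T)
      intro c _ hc
      rw [h0 r.1 r.2 c hc, zero_mul]
    have hMu := hu r.1 r.2
    simp only [Matrix.mulVec, dotProduct] at hMu
    simp only [Matrix.mulVec, dotProduct, Pi.zero_apply, Matrix.of_apply, hB]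
    rw [this, hTfull]
    exact hMu
  -- transpose has trivial kernel
  have hinj : Function.Injective (Bᵀ.mulVecLin) := by
    rw [← LinearMap.ker_eq_bot, LinearMap.ker_eq_bot']
    intro cv hcv
    have hext : ∀ col : Fin n, ∑ r : {r // r ∈ s}, cv r * M r.1 col = 0 := by
      intro col
      by_cases hcol : col ∈ T
      · have := congrFun hcv ⟨col, hcol⟩
        simpa [Matrix.mulVecLin, Matrix.mulVec, Matrix.vecMul, dotProduct, hB, mul_comm] using this
      · apply Finset.sum_eq_zero
        intro r _
        rw [h0 r.1 r.2 col hcol, mul_zero]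
    -- extend cv by zero and use invertibility
    set cext : Fin n → ℝ := fun r => if h : r ∈ s then cv ⟨r, h⟩ else 0 with hcext
    have hvm : cext ᵥ* M = 0 := by
      funext col
      simp only [Matrix.vecMul, dotProduct, Pi.zero_apply]
      calc ∑ r : Fin n, cext r * M r col
          = ∑ r ∈ s, cext r * M r col := by
            symm
            apply Finset.sum_subset (Finset.subset_univ s)
            intro r _ hr
            simp [hcext, hr]
        _ = ∑ r : {r // r ∈ s}, cext r.1 * M r.1 col := by
            rw [← Finset.sum_coe_sort s (fun r => cext r * M r col)]
        _ = ∑ r : {r // r ∈ s}, cv r * M r.1 col := by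
            apply Finset.sum_congr rfl
            intro r _
            simp [hcext, r.2]
        _ = 0 := hext col
    have hu : IsUnit M.det := isUnit_iff_ne_zero.2 hM
    have : cext = 0 := by
      have h1 : cext ᵥ* (M * M⁻¹) = 0 ᵥ* M⁻¹ := by
        rw [← Matrix.vecMul_vecMul, hvm]
      rwa [Matrix.mul_nonsing_inv M hu, Matrix.vecMul_one, Matrix.zero_vecMul] at h1
    funext r
    have := congrFun this r.1
    simpa [hcext, r.2] using this
  -- dimension count
  have hrankT : Bᵀ.rank = s.card := by
    have h1 : LinearMap.ker (Bᵀ.mulVecLin) = ⊥ := LinearMap.ker_eq_bot.2 hinj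
    have := LinearMap.finrank_range_add_finrank_ker (Bᵀ.mulVecLin)
    rw [h1, finrank_bot, add_zero] at this
    rw [Matrix.rank, this]
    simp [Module.finrank_pi]
  have hrankB : B.rank = s.card := by rw [← Matrix.rank_transpose]; exact hrankT
  have hkerdim : Module.finrank ℝ (LinearMap.ker (B.mulVecLin)) = 1 := by
    have := LinearMap.finrank_range_add_finrank_ker (B.mulVecLin)
    have hdom : Module.finrank ℝ ({c // c ∈ T} → ℝ) = T.card := by
      simp [Module.finrank_pi]
    rw [hdom, hcard] at this
    have hr : Module.finrank ℝ (LinearMap.range (B.mulVecLin)) = s.card := hrankB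
    omega
  -- final: restrictions lie in a 1-dimensional kernel
  set vT : {c // c ∈ T} → ℝ := fun c => v c.1 with hvT
  set vT' : {c // c ∈ T} → ℝ := fun c => v' c.1 with hvT'
  have hmem : vT ∈ LinearMap.ker (B.mulVecLin) := by
    rw [LinearMap.mem_ker, Matrix.mulVecLin_apply]; exact hker v hv
  have hmem' : vT' ∈ LinearMap.ker (B.mulVecLin) := by
    rw [LinearMap.mem_ker, Matrix.mulVecLin_apply]; exact hker v' hv'
  by_cases hz : vT = 0
  · intro a ha bb hb
    have h1 : v a = 0 := congrFun hz ⟨a, ha⟩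
    have h2 : v bb = 0 := congrFun hz ⟨bb, hb⟩
    rw [h1, h2]; ring
  · have hspan : Submodule.span ℝ {vT} = LinearMap.ker (B.mulVecLin) := by
      apply Submodule.eq_of_le_of_finrank_le
      · rw [Submodule.span_le, Set.singleton_subset_iff]; exact hmem
      · rw [hkerdim, finrank_span_singleton hz]
    have hm2 : vT' ∈ Submodule.span ℝ {vT} := hspan ▸ hmem'
    obtain ⟨cc, hc⟩ := Submodule.mem_span_singleton.1 hm2
    intro a ha bb hb
    have ha' : v' a = cc * v a := by
      have := congrFun hc ⟨a, ha⟩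
      simpa [hvT, hvT'] using this.symm
    have hbb' : v' bb = cc * v bb := by
      have := congrFun hc ⟨bb, hb⟩
      simpa [hvT, hvT'] using this.symm
    rw [ha', hbb']; ring
lemma card_filter_lt (n t : ℕ) (h : t ≤ n) :
    (Finset.univ.filter (fun r : Fin n => (r : ℕ) < t)).card = t := by
  have hbij : (Finset.univ.filter (fun r : Fin n => (r : ℕ) < t)).card
      = (Finset.range t).card := by
    apply Finset.card_bij (fun (a : Fin n) _ => (a : ℕ))
    · intro a ha
      exact Finset.mem_range.2 (Finset.mem_filter.1 ha).2
    · intro a _ a' _ hh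
      exact Fin.val_injective hh
    · intro bb hb
      have hbn : bb < n := lt_of_lt_of_le (Finset.mem_range.1 hb) h
      exact ⟨⟨bb, hbn⟩, Finset.mem_filter.2 ⟨Finset.mem_univ _, Finset.mem_range.1 hb⟩, rfl⟩
  rw [hbij, Finset.card_range]

lemma card_filter_le (n t : ℕ) (h : t ≤ n) :
    (Finset.univ.filter (fun r : Fin n => t ≤ (r : ℕ))).card = n - t := by
  have h1 := Finset.card_filter_add_card_filter_not
    (s := (Finset.univ : Finset (Fin n))) (p := fun r : Fin n => (r : ℕ) < t)
  have h2 : (Finset.univ.filter (fun r : Fin n => ¬ (r : ℕ) < t)).card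
      = (Finset.univ.filter (fun r : Fin n => t ≤ (r : ℕ))).card := by
    congr 1
    apply Finset.filter_congr
    intro r _
    simp [not_lt]
  rw [card_filter_lt n t h, h2] at h1
  simp at h1
  omega

lemma affine_eq_iff (α β a1 a2 b1 b2 t : ℝ) (hH : β - α ≠ 0) :
    affInterp α β a1 a2 t = affInterp α β b1 b2 t ↔
      (a1 - b1) * (β - α) + ((a2 - b2) - (a1 - b1)) * (t - α) = 0 := by
  unfold affInterp
  rw [add_div' _ _ _ hH, add_div' _ _ _ hH, div_left_inj' hH]
  constructor
  · intro h; linear_combination h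
  · intro h; linear_combination h

lemma lines_lemma (α β u1 u2 p1 p2 q1 q2 : ℝ) (hab : α < β)
    (hs : (u1 - p1) * (u2 - p2) < 0) (hs' : (u1 - q1) * (u2 - q2) < 0)
    (hcross : (u1 - p1) * (u2 - q2) = (u2 - p2) * (u1 - q1)) :
    ∃ t ∈ Set.Ioo α β,
      affInterp α β u1 u2 t = affInterp α β p1 p2 t ∧
      affInterp α β u1 u2 t = affInterp α β q1 q2 t ∧
      ∀ t' ∈ Set.Ioo α β,
        (affInterp α β u1 u2 t' = affInterp α β p1 p2 t' ∨
          affInterp α β u1 u2 t' = affInterp α β q1 q2 t') → t' = t := by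
  have hH : (0:ℝ) < β - α := sub_pos.2 hab
  have hHne : β - α ≠ 0 := ne_of_gt hH
  set d1 := u1 - p1 with hd1def
  set d2 := u2 - p2 with hd2def
  set e1 := u1 - q1 with he1def
  set e2 := u2 - q2 with he2def
  have hd12 : d1 - d2 ≠ 0 := by
    intro h
    have hd : d2 = d1 := by linarith
    rw [hd] at hs
    nlinarith
  have he12 : e1 - e2 ≠ 0 := by
    intro h
    have hd : e2 = e1 := by linarith
    rw [hd] at hs'
    nlinarith
  have hd1 : d1 ≠ 0 := by intro h; rw [h] at hs; simp at hs
  set τ := d1 / (d1 - d2) with hτ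
  have hτ0 : 0 < τ := by
    rcases lt_trichotomy d1 0 with h | h | h
    · have h2 : 0 < d2 := by nlinarith
      exact div_pos_of_neg_of_neg h (by linarith)
    · exact absurd h hd1
    · have h2 : d2 < 0 := by nlinarith
      exact div_pos h (by linarith)
  have hτ1 : τ < 1 := by
    rcases lt_trichotomy d1 0 with h | h | h
    · have h2 : 0 < d2 := by nlinarith
      rw [hτ, div_lt_one_iff]
      exact Or.inr (Or.inr ⟨by linarith, by linarith⟩)
    · exact absurd h hd1
    · have h2 : d2 < 0 := by nlinarith
      rw [hτ, div_lt_one_iff]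
      exact Or.inl ⟨by linarith, by linarith⟩
  refine ⟨α + τ * (β - α), ⟨by nlinarith, by nlinarith⟩, ?_, ?_, ?_⟩
  · rw [affine_eq_iff _ _ _ _ _ _ _ hHne]
    have : α + τ * (β - α) - α = τ * (β - α) := by ring
    rw [this, hτ]
    field_simp
    ring
  · rw [affine_eq_iff _ _ _ _ _ _ _ hHne]
    have : α + τ * (β - α) - α = τ * (β - α) := by ring
    rw [this, hτ]
    have hc : d1 * e2 = d2 * e1 := hcross
    field_simp
    linear_combination (β - α) * hc
  · rintro t' _ (h | h) <;> rw [affine_eq_iff _ _ _ _ _ _ _ hHne] at h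
    · have h2 : d1 * (β - α) + (d2 - d1) * (α + τ * (β - α) - α) = 0 := by
        have : α + τ * (β - α) - α = τ * (β - α) := by ring
        rw [this, hτ]
        field_simp
        ring
      have h3 : (d2 - d1) * (t' - (α + τ * (β - α))) = 0 := by linear_combination h - h2
      have h4 : d2 - d1 ≠ 0 := fun hc => hd12 (by linarith [sub_eq_zero.1 hc])
      have := mul_eq_zero.1 h3
      rcases this with hc | hc
      · exact absurd hc h4
      · linarith [sub_eq_zero.1 hc]
    · have h2 : e1 * (β - α) + (e2 - e1) * (α + τ * (β - α) - α) = 0 := by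
        have : α + τ * (β - α) - α = τ * (β - α) := by ring
        rw [this, hτ]
        have hc : d1 * e2 = d2 * e1 := hcross
        field_simp
        linear_combination (β - α) * hc
      have h3 : (e2 - e1) * (t' - (α + τ * (β - α))) = 0 := by linear_combination h - h2
      have h4 : e2 - e1 ≠ 0 := fun hc => he12 (by linarith [sub_eq_zero.1 hc])
      rcases mul_eq_zero.1 h3 with hc | hc
      · exact absurd hc h4
      · linarith [sub_eq_zero.1 hc]
/-- Corollary 3.2: let `2 ≤ k ≤ n`, and refine the grid `x` by inserting `m`
(resp. `m'`) points inside `(x_{k−1}, x_k)`, with refined Galerkin solutions `w` (resp. `w'`)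
whose values at the old nodes `x₁, …, xₙ` are `uv` (resp. `uv'`). Then for each
`i ∈ {2, …, n}` with `i ≠ k` where the nodal differences with `Uⁿ` change sign for both
refinements, the unique intersection point in `(x_{i−1}, xᵢ)` of the affine interpolants of
`Uⁿ` and of `uv` coincides with that of `Uⁿ` and `uv'`: the intersection is independent of
`m` and of the distribution of the added points in `(x_{k−1}, x_k)`. -/
theorem statement10 (n m m' k : ℕ) (hn : 1 ≤ n) (hm : 1 ≤ m) (hm' : 1 ≤ m')
    (hk2 : 2 ≤ k) (hkn : k ≤ n)
    (x y y' : ℕ → ℝ) (ε b c : ℝ) (f : ℝ → ℝ)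
    (hf : ContinuousOn f (Set.Icc 0 1))
    (hx : IsGrid x n) (hy : IsGrid y (n + m)) (hy' : IsGrid y' (n + m'))
    (hagreeL : ∀ i ≤ k - 1, y i = x i)
    (hagreeR : ∀ i, k ≤ i → i ≤ n + 1 → y (i + m) = x i)
    (hagreeL' : ∀ i ≤ k - 1, y' i = x i)
    (hagreeR' : ∀ i, k ≤ i → i ≤ n + 1 → y' (i + m') = x i)
    (A : Matrix (Fin n) (Fin n) ℝ) (hA : A = stiff ε b c x n) (hAdet : A.det ≠ 0)
    (Un : ℕ → ℝ)
    (hUn : A *ᵥ (fun j : Fin n => Un ((j : ℕ) + 1))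
      = fun j : Fin n => load f x ((j : ℕ) + 1))
    (w w' : ℕ → ℝ)
    (hw : IsGalerkinSol ε b c f y (n + m) w)
    (hw' : IsGalerkinSol ε b c f y' (n + m') w')
    (uv uv' : ℕ → ℝ)
    (huv : ∀ j, uv j = if j ≤ k - 1 then w j else w (j + m))
    (huv' : ∀ j, uv' j = if j ≤ k - 1 then w' j else w' (j + m'))
    (i : ℕ) (hi2 : 2 ≤ i) (hin : i ≤ n) (hik : i ≠ k)
    (hsgn : (Un (i - 1) - uv (i - 1)) * (Un i - uv i) < 0)
    (hsgn' : (Un (i - 1) - uv' (i - 1)) * (Un i - uv' i) < 0) :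
    ∃ t ∈ Set.Ioo (x (i - 1)) (x i),
      affInterp (x (i - 1)) (x i) (Un (i - 1)) (Un i) t
        = affInterp (x (i - 1)) (x i) (uv (i - 1)) (uv i) t ∧
      affInterp (x (i - 1)) (x i) (Un (i - 1)) (Un i) t
        = affInterp (x (i - 1)) (x i) (uv' (i - 1)) (uv' i) t ∧
      ∀ t' ∈ Set.Ioo (x (i - 1)) (x i),
        (affInterp (x (i - 1)) (x i) (Un (i - 1)) (Un i) t'
            = affInterp (x (i - 1)) (x i) (uv (i - 1)) (uv i) t' ∨
          affInterp (x (i - 1)) (x i) (Un (i - 1)) (Un i) t'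
            = affInterp (x (i - 1)) (x i) (uv' (i - 1)) (uv' i) t') → t' = t := by
  classical
  obtain ⟨hx0, hx1, hxlt⟩ := hx
  obtain ⟨hy0, hy1, hylt⟩ := hy
  obtain ⟨hy0', hy1', hylt'⟩ := hy'
  have gx := grid_mono hxlt
  -- difference vectors at the old interior nodes
  set D : Fin n → ℝ :=
    (fun j : Fin n => Un ((j : ℕ) + 1)) - (fun j : Fin n => uv ((j : ℕ) + 1)) with hD
  set D' : Fin n → ℝ :=
    (fun j : Fin n => Un ((j : ℕ) + 1)) - (fun j : Fin n => uv' ((j : ℕ) + 1)) with hD'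
  -- the coarse Galerkin equations hold for uv away from rows k-1, k
  have hAuv : ∀ (uvv ww : ℕ → ℝ) (yy : ℕ → ℝ) (mm : ℕ), 1 ≤ mm →
      (∀ i ≤ n + mm, yy i < yy (i + 1)) →
      (∀ i ≤ k - 1, yy i = x i) →
      (∀ i, k ≤ i → i ≤ n + 1 → yy (i + mm) = x i) →
      IsGalerkinSol ε b c f yy (n + mm) ww →
      (∀ j, uvv j = if j ≤ k - 1 then ww j else ww (j + mm)) →
      ∀ r : Fin n, ((r : ℕ) + 1 ≤ k - 2 ∨ k + 1 ≤ (r : ℕ) + 1) →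
      (A *ᵥ (fun j : Fin n => uvv ((j : ℕ) + 1))) r = load f x ((r : ℕ) + 1) := by
    intro uvv ww yy mm hmm hyylt hagL hagR hgal huvv r hr
    have hsum : (A *ᵥ (fun j : Fin n => uvv ((j : ℕ) + 1))) r
        = ∑ ii ∈ Finset.Icc 1 n, uvv ii * bform ε b c (hatFn x ii) (hatDeriv x ii)
            (hatFn x ((r : ℕ) + 1)) (hatDeriv x ((r : ℕ) + 1)) := by
      rw [sum_Icc_one_eq_fin n (fun ii => uvv ii * bform ε b c (hatFn x ii) (hatDeriv x ii)
            (hatFn x ((r : ℕ) + 1)) (hatDeriv x ((r : ℕ) + 1)))]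
      simp only [hA, Matrix.mulVec, dotProduct, stiff]
      apply Finset.sum_congr rfl
      intro jj _
      ring
    rw [hsum]
    exact transfer ε b c f x yy n mm k hmm hk2 hkn hxlt hyylt hagL hagR ww uvv
      (fun j h1 h2 => hgal j h1 h2) huvv ((r : ℕ) + 1) (by omega) (by omega) hr
  have hADr : ∀ r : Fin n, ((r : ℕ) + 1 ≤ k - 2 ∨ k + 1 ≤ (r : ℕ) + 1) → (A *ᵥ D) r = 0 := by
    intro r hr
    have h1 : (A *ᵥ (fun j : Fin n => Un ((j : ℕ) + 1))) r = load f x ((r : ℕ) + 1) := by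
      rw [hUn]
    rw [hD, Matrix.mulVec_sub]
    simp only [Pi.sub_apply]
    rw [h1, hAuv uv w y m hm hylt hagreeL hagreeR hw huv r hr, sub_self]
  have hADr' : ∀ r : Fin n, ((r : ℕ) + 1 ≤ k - 2 ∨ k + 1 ≤ (r : ℕ) + 1) → (A *ᵥ D') r = 0 := by
    intro r hr
    have h1 : (A *ᵥ (fun j : Fin n => Un ((j : ℕ) + 1))) r = load f x ((r : ℕ) + 1) := by
      rw [hUn]
    rw [hD', Matrix.mulVec_sub]
    simp only [Pi.sub_apply]
    rw [h1, hAuv uv' w' y' m' hm' hylt' hagreeL' hagreeR' hw' huv' r hr, sub_self]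
  -- the cross-product identity
  have ha : i - 2 < n := by omega
  have hb : i - 1 < n := by omega
  have hcross : (Un (i - 1) - uv (i - 1)) * (Un i - uv' i)
      = (Un i - uv i) * (Un (i - 1) - uv' (i - 1)) := by
    rcases Nat.lt_or_ge i k with hikL | hikR
    · -- left case : i ≤ k - 1
      set sL := Finset.univ.filter (fun r : Fin n => (r : ℕ) < k - 2) with hsL
      set TL := Finset.univ.filter (fun r : Fin n => (r : ℕ) < k - 1) with hTL
      have hcard : TL.card = sL.card + 1 := by
        rw [hsL, hTL, card_filter_lt n (k - 1) (by omega), card_filter_lt n (k - 2) (by omega)]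
        omega
      have h0 : ∀ r ∈ sL, ∀ col, col ∉ TL → A r col = 0 := by
        intro r hrs col hcT
        have hrk : (r : ℕ) < k - 2 := (Finset.mem_filter.1 hrs).2
        have hck : k - 1 ≤ (col : ℕ) := by
          by_contra hcc
          exact hcT (Finset.mem_filter.2 ⟨Finset.mem_univ _, by omega⟩)
        rw [hA]
        show bform ε b c (hatFn x ((col : ℕ) + 1)) (hatDeriv x ((col : ℕ) + 1))
          (hatFn x ((r : ℕ) + 1)) (hatDeriv x ((r : ℕ) + 1)) = 0
        apply bform_tri₂ ε b c x ((r : ℕ) + 1) ((col : ℕ) + 1)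
        · exact hxlt ((r : ℕ) + 1) (by omega)
        · rw [show (col : ℕ) + 1 - 1 = (col : ℕ) by omega]
          exact le_of_lt (hxlt (col : ℕ) (by omega))
        · rw [show (col : ℕ) + 1 - 1 = (col : ℕ) by omega]
          exact gx ((r : ℕ) + 1 + 1) (col : ℕ) (by omega) (by omega)
      have hva : ∀ r ∈ sL, (A *ᵥ D) r = 0 := by
        intro r hrs
        exact hADr r (Or.inl (by have := (Finset.mem_filter.1 hrs).2; omega))
      have hva' : ∀ r ∈ sL, (A *ᵥ D') r = 0 := by
        intro r hrs
        exact hADr' r (Or.inl (by have := (Finset.mem_filter.1 hrs).2; omega))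
      have key := keyLA n A hAdet sL TL hcard h0 D D' hva hva'
      have haT : (⟨i - 2, ha⟩ : Fin n) ∈ TL :=
        Finset.mem_filter.2 ⟨Finset.mem_univ _, by show i - 2 < k - 1; omega⟩
      have hbT : (⟨i - 1, hb⟩ : Fin n) ∈ TL :=
        Finset.mem_filter.2 ⟨Finset.mem_univ _, by show i - 1 < k - 1; omega⟩
      have hres := key _ haT _ hbT
      simp only [hD, hD', Pi.sub_apply] at hres
      rw [show (⟨i - 2, ha⟩ : Fin n).val + 1 = i - 1 by simp; omega,
        show (⟨i - 1, hb⟩ : Fin n).val + 1 = i by simp; omega] at hres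
      exact hres
    · -- right case : k + 1 ≤ i
      have hik1 : k + 1 ≤ i := by omega
      set sR := Finset.univ.filter (fun r : Fin n => k ≤ (r : ℕ)) with hsR
      set TR := Finset.univ.filter (fun r : Fin n => k - 1 ≤ (r : ℕ)) with hTR
      have hcard : TR.card = sR.card + 1 := by
        rw [hsR, hTR, card_filter_le n k hkn, card_filter_le n (k - 1) (by omega)]
        omega
      have h0 : ∀ r ∈ sR, ∀ col, col ∉ TR → A r col = 0 := by
        intro r hrs col hcT
        have hrk : k ≤ (r : ℕ) := (Finset.mem_filter.1 hrs).2
        have hck : (col : ℕ) < k - 1 := by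
          by_contra hcc
          exact hcT (Finset.mem_filter.2 ⟨Finset.mem_univ _, by omega⟩)
        rw [hA]
        show bform ε b c (hatFn x ((col : ℕ) + 1)) (hatDeriv x ((col : ℕ) + 1))
          (hatFn x ((r : ℕ) + 1)) (hatDeriv x ((r : ℕ) + 1)) = 0
        apply bform_tri₁ ε b c x ((col : ℕ) + 1) ((r : ℕ) + 1)
        · exact hxlt ((col : ℕ) + 1) (by omega)
        · rw [show (r : ℕ) + 1 - 1 = (r : ℕ) by omega]
          exact le_of_lt (hxlt (r : ℕ) (by omega))
        · rw [show (r : ℕ) + 1 - 1 = (r : ℕ) by omega]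
          exact gx ((col : ℕ) + 1 + 1) (r : ℕ) (by omega) (by omega)
      have hva : ∀ r ∈ sR, (A *ᵥ D) r = 0 := by
        intro r hrs
        exact hADr r (Or.inr (by have := (Finset.mem_filter.1 hrs).2; omega))
      have hva' : ∀ r ∈ sR, (A *ᵥ D') r = 0 := by
        intro r hrs
        exact hADr' r (Or.inr (by have := (Finset.mem_filter.1 hrs).2; omega))
      have key := keyLA n A hAdet sR TR hcard h0 D D' hva hva'
      have haT : (⟨i - 2, ha⟩ : Fin n) ∈ TR :=
        Finset.mem_filter.2 ⟨Finset.mem_univ _, by show k - 1 ≤ i - 2; omega⟩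
      have hbT : (⟨i - 1, hb⟩ : Fin n) ∈ TR :=
        Finset.mem_filter.2 ⟨Finset.mem_univ _, by show k - 1 ≤ i - 1; omega⟩
      have hres := key _ haT _ hbT
      simp only [hD, hD', Pi.sub_apply] at hres
      rw [show (⟨i - 2, ha⟩ : Fin n).val + 1 = i - 1 by simp; omega,
        show (⟨i - 1, hb⟩ : Fin n).val + 1 = i by simp; omega] at hres
      exact hres
  have hab : x (i - 1) < x i := by
    have h := hxlt (i - 1) (by omega)
    rwa [show i - 1 + 1 = i by omega] at h
  exact lines_lemma (x (i - 1)) (x i) (Un (i - 1)) (Un i) (uv (i - 1)) (uv i)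
    (uv' (i - 1)) (uv' i) hab hsgn hsgn' hcross
end

section
/- (Theorem 4.1.) Let 0 = x₀ < ⋯ < xₙ < ŝ₁ < 1 be a grid, ε, b, c reals, f : [0,1] → ℝ continuous. Let φ₁, …, φ_{n−1} be the hat functions at x₁, …, x_{n−1}, φ̃ₙ the hat at xₙ (support [x_{n−1}, ŝ₁]), and φ_{ŝ₁} the hat at ŝ₁ (support [xₙ, 1]). Assume the key entry vanishes: a(φ_{ŝ₁}, φ̃ₙ) = 0. Let (û₁, …, ûₙ, û_{ŝ₁}) solve the full refined Galerkin system (a-pairing against each of φ₁, …, φ_{n−1}, φ̃ₙ, φ_{ŝ₁} equals the corresponding load). Let g be ANY real number (e.g. g = u(ŝ₁) for the exact solution u), and let (w₁, …, wₙ) solve the Galerkin system of the auxiliary Dirichlet problem on [0, ŝ₁] with boundary value g at ŝ₁: for j = 1, …, n−1, Σᵢ wᵢ a(φᵢ, φⱼ) + wₙ a(φ̃ₙ, φⱼ) = ∫₀¹ f·φⱼ, and Σ_{i≤n−1} wᵢ a(φᵢ, φ̃ₙ) + wₙ a(φ̃ₙ, φ̃ₙ) = ∫₀¹ f·φ̃ₙ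 − a(φ_{ŝ₁}, φ̃ₙ)·g. If the n×n matrix of these systems (entries a(φⱼ, φᵢ) with φₙ replaced by φ̃ₙ) is invertible, then wᵢ = ûᵢ for all i = 1, …, n; that is, the finite element solution on the full grid coincides on [0, xₙ] with the finite element solution of the auxiliary problem, regardless of the boundary value g. -/
open Matrix MeasureTheory

lemma hat3_zero_left {l m r t : ℝ} (h : l < m) (ht : t ≤ l) : hat3 l m r t = 0 := by
  unfold hat3
  split_ifs with h1 h2
  · have : t = l := le_antisymm ht h1.1
    simp [this]
  · linarith [h2.1]
  · rfl

lemma hat3_zero_right {l m r t : ℝ} (h : m < r) (ht : r ≤ t) : hat3 l m r t = 0 := by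
  unfold hat3
  split_ifs with h1 h2
  · linarith [h1.2]
  · have : t = r := le_antisymm h2.2 ht
    simp [this]
  · rfl

lemma hat3D_zero_left {l m r t : ℝ} (h : l ≤ m) (ht : t ≤ l) : hat3D l m r t = 0 := by
  unfold hat3D
  split_ifs with h1 h2
  · linarith [h1.1]
  · linarith [h2.1]
  · rfl

lemma hat3D_zero_right {l m r t : ℝ} (h : m ≤ r) (ht : r ≤ t) : hat3D l m r t = 0 := by
  unfold hat3D
  split_ifs with h1 h2
  · linarith [h1.2]
  · linarith [h2.2]
  · rfl

/-- If the supports are separated (`y (j+1) ≤ y n`), the bilinear form of `φ_{n+1}` against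
`φ_j` vanishes since every integrand is identically zero. -/
lemma bform_sep_zero (ε b c : ℝ) (y : ℕ → ℝ) (n j : ℕ)
    (h1 : y n < y (n + 1)) (h2 : y j < y (j + 1)) (h3 : y (j + 1) ≤ y n) :
    bform ε b c (hatFn y (n + 1)) (hatDeriv y (n + 1)) (hatFn y j) (hatDeriv y j) = 0 := by
  have hu : ∀ t : ℝ, t ≤ y n → hatFn y (n + 1) t = 0 := fun t ht =>
    hat3_zero_left h1 (by simpa using ht)
  have huD : ∀ t : ℝ, t ≤ y n → hatDeriv y (n + 1) t = 0 := fun t ht =>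
    hat3D_zero_left h1.le (by simpa using ht)
  have hv : ∀ t : ℝ, y n < t → hatFn y j t = 0 := fun t ht =>
    hat3_zero_right h2 (by linarith)
  have hvD : ∀ t : ℝ, y n < t → hatDeriv y j t = 0 := fun t ht =>
    hat3D_zero_right h2.le (by linarith)
  have e1 : ∀ t : ℝ, hatDeriv y (n + 1) t * hatDeriv y j t = 0 := by
    intro t
    by_cases ht : t ≤ y n
    · rw [huD t ht, zero_mul]
    · rw [hvD t (not_le.mp ht), mul_zero]
  have e2 : ∀ t : ℝ, hatFn y (n + 1) t * hatDeriv y j t = 0 := by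
    intro t
    by_cases ht : t ≤ y n
    · rw [hu t ht, zero_mul]
    · rw [hvD t (not_le.mp ht), mul_zero]
  have e3 : ∀ t : ℝ, hatFn y (n + 1) t * hatFn y j t = 0 := by
    intro t
    by_cases ht : t ≤ y n
    · rw [hu t ht, zero_mul]
    · rw [hv t (not_le.mp ht), mul_zero]
  unfold bform
  simp only [e1, e2, e3, intervalIntegral.integral_zero, mul_zero, add_zero]

lemma grid_le {y : ℕ → ℝ} {N : ℕ} (hy : IsGrid y N) {i j : ℕ} (hij : i ≤ j)
    (hj : j ≤ N + 1) : y i ≤ y j := by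
  obtain ⟨k, rfl⟩ := Nat.le.dest hij
  clear hij
  induction k with
  | zero => simp
  | succ k ih =>
    have h1 : y i ≤ y (i + k) := ih (by omega)
    have h2 : y (i + k) < y (i + k + 1) := hy.2.2 (i + k) (by omega)
    calc y i ≤ y (i + k) := h1
      _ ≤ y (i + (k + 1)) := by rw [show i + (k + 1) = i + k + 1 by ring]; linarith

/-- Theorem 4.1: on the grid `0 = y₀ < y₁ < ⋯ < yₙ < y_{n+1} = ŝ₁ < y_{n+2} = 1`
(the `xᵢ` being `y i` for `i ≤ n`), assume the key stiffness entry `a(φ_{ŝ₁}, φ̃ₙ)` vanishes.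
If `(û₁, …, ûₙ, û_{ŝ₁}) = w` solves the full refined Galerkin system, `g` is any real number,
and `(w₁, …, wₙ) = v` solves the Galerkin system of the auxiliary Dirichlet problem on
`[0, ŝ₁]` with boundary value `g` at `ŝ₁`, then (provided the `n×n` system matrix is
invertible) `vᵢ = ûᵢ` for all `i = 1, …, n`, regardless of `g`. -/
theorem statement13 (n : ℕ) (hn : 1 ≤ n) (y : ℕ → ℝ) (ε b c : ℝ) (f : ℝ → ℝ)
    (hf : ContinuousOn f (Set.Icc 0 1))
    (hy : IsGrid y (n + 1))
    (hkey : bform ε b c (hatFn y (n + 1)) (hatDeriv y (n + 1))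
        (hatFn y n) (hatDeriv y n) = 0)
    (w : ℕ → ℝ) (hw : IsGalerkinSol ε b c f y (n + 1) w)
    (g : ℝ) (v : ℕ → ℝ)
    (hv1 : ∀ j, 1 ≤ j → j ≤ n - 1 →
      (∑ i ∈ Finset.Icc 1 n,
          v i * bform ε b c (hatFn y i) (hatDeriv y i) (hatFn y j) (hatDeriv y j))
        = load f y j)
    (hv2 : (∑ i ∈ Finset.Icc 1 n,
          v i * bform ε b c (hatFn y i) (hatDeriv y i) (hatFn y n) (hatDeriv y n))
        = load f y n
          - bform ε b c (hatFn y (n + 1)) (hatDeriv y (n + 1))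
              (hatFn y n) (hatDeriv y n) * g)
    (hdet : (stiff ε b c y n).det ≠ 0) :
    ∀ i, 1 ≤ i → i ≤ n → v i = w i := by
  set B : ℕ → ℕ → ℝ := fun i j =>
    bform ε b c (hatFn y i) (hatDeriv y i) (hatFn y j) (hatDeriv y j) with hB
  have hlt : ∀ i, i ≤ n + 1 → y i < y (i + 1) := hy.2.2
  have hzeroB : ∀ j, 1 ≤ j → j ≤ n → B (n + 1) j = 0 := by
    intro j h1 h2
    rcases eq_or_lt_of_le h2 with h | h
    · rw [hB]; simp only; rw [h]; exact hkey
    · exact bform_sep_zero ε b c y n j (hlt n (by omega)) (hlt j (by omega))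
        (grid_le hy (by omega) (by omega))
  have hw' : ∀ j, 1 ≤ j → j ≤ n → (∑ i ∈ Finset.Icc 1 n, w i * B i j) = load f y j := by
    intro j h1 h2
    have h := hw j h1 (by omega)
    rw [Finset.sum_Icc_succ_top (by omega)] at h
    rw [show (∑ i ∈ Finset.Icc 1 n,
        w i * bform ε b c (hatFn y i) (hatDeriv y i) (hatFn y j) (hatDeriv y j))
        = ∑ i ∈ Finset.Icc 1 n, w i * B i j from rfl] at h
    rw [show bform ε b c (hatFn y (n+1)) (hatDeriv y (n+1)) (hatFn y j) (hatDeriv y j)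
        = B (n+1) j from rfl, hzeroB j h1 h2, mul_zero, add_zero] at h
    exact h
  have hv' : ∀ j, 1 ≤ j → j ≤ n → (∑ i ∈ Finset.Icc 1 n, v i * B i j) = load f y j := by
    intro j h1 h2
    rcases eq_or_lt_of_le h2 with h | h
    · rw [h]
      rw [hkey, zero_mul, sub_zero] at hv2
      exact hv2
    · exact hv1 j h1 (by omega)
  set d : Fin n → ℝ := fun i => v ((i : ℕ) + 1) - w ((i : ℕ) + 1) with hd
  have hmv : (stiff ε b c y n).mulVec d = 0 := by
    funext j
    have hkeyj : (∑ i ∈ Finset.Icc 1 n, (v i - w i) * B i ((j : ℕ) + 1)) = 0 := by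
      have e : (∑ i ∈ Finset.Icc 1 n, (v i - w i) * B i ((j : ℕ) + 1))
          = (∑ i ∈ Finset.Icc 1 n, v i * B i ((j : ℕ) + 1))
            - ∑ i ∈ Finset.Icc 1 n, w i * B i ((j : ℕ) + 1) := by
        rw [← Finset.sum_sub_distrib]
        exact Finset.sum_congr rfl fun i _ => by ring
      rw [e, hw' ((j : ℕ) + 1) (by omega) (by omega),
        hv' ((j : ℕ) + 1) (by omega) (by omega), sub_self]
    have hIcc : (∑ i ∈ Finset.Icc 1 n, (v i - w i) * B i ((j : ℕ) + 1))
        = ∑ i : Fin n, (v ((i : ℕ) + 1) - w ((i : ℕ) + 1)) * B ((i : ℕ) + 1) ((j : ℕ) + 1) := by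
      rw [← Finset.Ico_add_one_right_eq_Icc, Finset.sum_Ico_eq_sum_range, Nat.add_sub_cancel,
        Fin.sum_univ_eq_sum_range
          (fun k => (v (k + 1) - w (k + 1)) * B (k + 1) ((j : ℕ) + 1)) n]
      exact Finset.sum_congr rfl fun i _ => by rw [Nat.add_comm 1 i]
    simp only [Matrix.mulVec, dotProduct, Pi.zero_apply, stiff, hd]
    rw [hIcc] at hkeyj
    rw [← hkeyj]
    exact Finset.sum_congr rfl fun i _ => by rw [hB]; ring
  have hzero : d = 0 := Matrix.eq_zero_of_mulVec_eq_zero hdet hmv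
  intro i h1 h2
  have := congrFun hzero ⟨i - 1, by omega⟩
  simp only [hd, Pi.zero_apply] at this
  have hsub : i - 1 + 1 = i := by omega
  rw [hsub] at this
  linarith [this]
end

section
/- (Lemma 5.1, Cramer form.) Let 0 = x₀ < ⋯ < x_{n+1} = 1 be a grid, ε, b, c reals, f : [0,1] → ℝ continuous, A = (a(φⱼ, φᵢ))_{1≤i,j≤n} invertible, and Uⁿ ∈ ℝⁿ the solution of A·Uⁿ = F with Fⱼ = ∫₀¹ f·φⱼ. Let xₙ < s₁ < ⋯ < s_m < 1 and let (u₁, …, uₙ, u_{s₁}, …, u_{s_m}) solve the refined Galerkin system, with C the scalar satisfying Uⁿ − (u₁, …, uₙ) = C·A⁻¹eₙ, and assume C ≠ 0. For 1 ≤ j ≤ n let Aⱼ denote the matrix A with its j-th column replaced by eₙ = (0, …, 0, 1)ᵗ. Then for each 2 ≤ i ≤ n: (i) Uⁿᵢ − uᵢ = C·det(Aᵢ)/det(A); (ii) the piecewise linear functions with nodal values Uⁿ and (u₁, …, uₙ) differ at both x_{i−1} and xᵢ and intersect at an interior point of (x_{i−1}, xᵢ) if and only if det(Aᵢ)·det(A_{i−1})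 < 0; (iii) in that case the unique intersection point is Qᵢ = ((rᵢ·xᵢ + x_{i−1})/(rᵢ + 1), (rᵢ·Uⁿᵢ + Uⁿ_{i−1})/(rᵢ + 1)) with rᵢ = |det(A_{i−1})/det(Aᵢ)|. -/
open Matrix MeasureTheory

lemma inv_mulVec_eq_cramer {n : ℕ} (A : Matrix (Fin n) (Fin n) ℝ) (b : Fin n → ℝ)
    (j : Fin n) : (A⁻¹ *ᵥ b) j = (A.updateCol j b).det / A.det := by
  rw [Matrix.inv_def, Ring.inverse_eq_inv', Matrix.smul_mulVec,
    ← Matrix.cramer_eq_adjugate_mulVec, Pi.smul_apply, Matrix.cramer_apply,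
    smul_eq_mul, div_eq_inv_mul]

lemma affInterp_sub (α β a1 a2 b1 b2 t : ℝ) (h : α ≠ β) :
    (affInterp α β a1 a2 t = affInterp α β b1 b2 t) ↔
      (a1 - b1) + ((a2 - b2) - (a1 - b1)) * (t - α) / (β - α) = 0 := by
  unfold affInterp
  rw [← sub_eq_zero]
  have hne : β - α ≠ 0 := sub_ne_zero.mpr (Ne.symm h)
  field_simp
  constructor <;> intro h' <;> nlinarith [h']

lemma cross_point (α β d1 d2 : ℝ) (hαβ : α < β) (h : d1 * d2 < 0) :
    (((|d1 / d2|) * β + α) / (|d1 / d2| + 1) ∈ Set.Ioo α β) ∧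
    (d1 + (d2 - d1) * ((((|d1 / d2|) * β + α) / (|d1 / d2| + 1)) - α) / (β - α) = 0) ∧
    (∀ t', d1 + (d2 - d1) * (t' - α) / (β - α) = 0 →
      t' = ((|d1 / d2|) * β + α) / (|d1 / d2| + 1)) ∧
    (∀ a1 a2 : ℝ, a1 + (a2 - a1) * ((((|d1 / d2|) * β + α) / (|d1 / d2| + 1)) - α) / (β - α)
      = ((|d1 / d2|) * a2 + a1) / (|d1 / d2| + 1)) := by
  have hne : β - α ≠ 0 := sub_ne_zero.mpr hαβ.ne'
  have h1 : d1 ≠ 0 := by intro h'; rw [h'] at h; simp at h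
  have h2 : d2 ≠ 0 := by intro h'; rw [h'] at h; simp at h
  have hr : |d1 / d2| = -d1 / d2 := by
    rcases lt_trichotomy d2 0 with hh | hh | hh
    · rw [abs_of_neg (div_neg_of_pos_of_neg (by nlinarith) hh)]; ring_nf
    · exact absurd hh h2
    · rw [abs_of_neg (div_neg_of_neg_of_pos (by nlinarith) hh)]; ring_nf
  set r : ℝ := |d1 / d2| with hrdef
  have hrrel : d1 = -r * d2 := by rw [hr]; field_simp
  have hrpos : 0 < r := abs_pos.mpr (div_ne_zero h1 h2)
  have hr1 : (0:ℝ) < r + 1 := by positivity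
  have hteq : ((r * β + α) / (r + 1)) - α = r * (β - α) / (r + 1) := by
    field_simp; ring
  have hdd : d2 - d1 ≠ 0 := by
    intro h'
    have hh : d1 = d2 := by linarith
    rw [hh] at h; nlinarith [mul_self_nonneg d2]
  have hzero : d1 + (d2 - d1) * ((((r) * β + α) / (r + 1)) - α) / (β - α) = 0 := by
    rw [hteq, hrrel]; field_simp; ring
  refine ⟨⟨?_, ?_⟩, hzero, ?_, ?_⟩
  · rw [lt_div_iff₀ hr1]; nlinarith
  · rw [div_lt_iff₀ hr1]; nlinarith
  · intro t' ht'
    have e1 : (d2 - d1) * (t' - α) / (β - α)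
        = (d2 - d1) * (((r * β + α) / (r + 1)) - α) / (β - α) := by linarith
    rw [div_eq_div_iff hne hne] at e1
    have e2 := mul_right_cancel₀ hne e1
    have e3 := mul_left_cancel₀ hdd e2
    linarith
  · intro a1 a2
    rw [hteq]; field_simp; ring

lemma cross_iff (α β d1 d2 : ℝ) (hαβ : α < β) :
    (d1 ≠ 0 ∧ d2 ≠ 0 ∧ ∃ t ∈ Set.Ioo α β,
        d1 + (d2 - d1) * (t - α) / (β - α) = 0)
      ↔ d1 * d2 < 0 := by
  have hne : β - α ≠ 0 := sub_ne_zero.mpr hαβ.ne'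
  constructor
  · rintro ⟨h1, h2, t, ⟨ht1, ht2⟩, heq⟩
    have hs1 : 0 < t - α := by linarith
    have hs2 : 0 < β - t := by linarith
    have heq' : d1 * (β - t) + d2 * (t - α) = 0 := by
      field_simp at heq; nlinarith [heq]
    rcases lt_trichotomy d1 0 with h | h | h
    · have : 0 < d2 := by nlinarith
      nlinarith
    · exact absurd h h1
    · have : d2 < 0 := by nlinarith
      nlinarith
  · intro h
    have h1 : d1 ≠ 0 := by intro h'; rw [h'] at h; simp at h
    have h2 : d2 ≠ 0 := by intro h'; rw [h'] at h; simp at h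
    obtain ⟨hmem, hz, _, _⟩ := cross_point α β d1 d2 hαβ h
    exact ⟨h1, h2, _, hmem, hz⟩

/-- Lemma 5.1, Cramer form: with `Uⁿ − (u₁, …, uₙ) = C·A⁻¹eₙ`, `C ≠ 0`, and
`Aⱼ` the matrix `A` with the column corresponding to node `xⱼ` replaced by `eₙ`, for each
`2 ≤ i ≤ n`: (i) `Uⁿᵢ − uᵢ = C·det(Aᵢ)/det(A)`; (ii) the two piecewise linear solutions differ
at both `x_{i−1}` and `xᵢ` and intersect inside `(x_{i−1}, xᵢ)` iff `det(Aᵢ)·det(A_{i−1}) < 0`;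
(iii) in that case the unique intersection point is
`Qᵢ = ((rᵢxᵢ + x_{i−1})/(rᵢ+1), (rᵢUⁿᵢ + Uⁿ_{i−1})/(rᵢ+1))` with
`rᵢ = |det(A_{i−1})/det(Aᵢ)|`. -/
theorem statement14 (n m : ℕ) (hn : 1 ≤ n) (hm : 1 ≤ m)
    (x y : ℕ → ℝ) (ε b c : ℝ) (f : ℝ → ℝ)
    (hf : ContinuousOn f (Set.Icc 0 1))
    (hx : IsGrid x n) (hy : IsGrid y (n + m))
    (hagree : ∀ i ≤ n, y i = x i)
    (A : Matrix (Fin n) (Fin n) ℝ) (hA : A = stiff ε b c x n) (hAdet : A.det ≠ 0)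
    (Un : ℕ → ℝ)
    (hUn : A *ᵥ (fun j : Fin n => Un ((j : ℕ) + 1))
      = fun j : Fin n => load f x ((j : ℕ) + 1))
    (w : ℕ → ℝ) (hw : IsGalerkinSol ε b c f y (n + m) w)
    (en : Fin n → ℝ) (hen : en = fun j : Fin n => if (j : ℕ) = n - 1 then (1 : ℝ) else 0)
    (C : ℝ)
    (hC : (fun j : Fin n => Un ((j : ℕ) + 1) - w ((j : ℕ) + 1)) = C • (A⁻¹ *ᵥ en))
    (hC0 : C ≠ 0) :
    ∀ i : ℕ, ∀ hi2 : 2 ≤ i, ∀ hin : i ≤ n,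
      (Un i - w i
          = C * (A.updateCol (⟨i - 1, by omega⟩ : Fin n) en).det / A.det) ∧
      ((Un (i - 1) - w (i - 1) ≠ 0 ∧ Un i - w i ≠ 0 ∧
          ∃ t ∈ Set.Ioo (x (i - 1)) (x i),
            affInterp (x (i - 1)) (x i) (Un (i - 1)) (Un i) t
              = affInterp (x (i - 1)) (x i) (w (i - 1)) (w i) t)
        ↔ (A.updateCol (⟨i - 1, by omega⟩ : Fin n) en).det
            * (A.updateCol (⟨i - 2, by omega⟩ : Fin n) en).det < 0) ∧
      ((A.updateCol (⟨i - 1, by omega⟩ : Fin n) en).det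
          * (A.updateCol (⟨i - 2, by omega⟩ : Fin n) en).det < 0 →
        let r := |(A.updateCol (⟨i - 2, by omega⟩ : Fin n) en).det
            / (A.updateCol (⟨i - 1, by omega⟩ : Fin n) en).det|
        ∃ t ∈ Set.Ioo (x (i - 1)) (x i),
          affInterp (x (i - 1)) (x i) (Un (i - 1)) (Un i) t
            = affInterp (x (i - 1)) (x i) (w (i - 1)) (w i) t ∧
          (∀ t' ∈ Set.Ioo (x (i - 1)) (x i),
            affInterp (x (i - 1)) (x i) (Un (i - 1)) (Un i) t'
              = affInterp (x (i - 1)) (x i) (w (i - 1)) (w i) t' → t' = t) ∧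
          t = (r * x i + x (i - 1)) / (r + 1) ∧
          affInterp (x (i - 1)) (x i) (Un (i - 1)) (Un i) t
            = (r * Un i + Un (i - 1)) / (r + 1)) := by
  intro i hi2 hin
  have hii : i - 1 + 1 = i := by omega
  have hii2 : i - 2 + 1 = i - 1 := by omega
  have hab : x (i - 1) < x i := by
    have h := hx.2.2 (i - 1) (by omega); rwa [hii] at h
  have hc1 := congrFun hC (⟨i - 1, by omega⟩ : Fin n)
  have hc2 := congrFun hC (⟨i - 2, by omega⟩ : Fin n)
  simp only [Pi.smul_apply, smul_eq_mul] at hc1 hc2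
  rw [inv_mulVec_eq_cramer] at hc1 hc2
  simp only [hii] at hc1
  simp only [hii2] at hc2
  set D1 := (A.updateCol (⟨i - 1, by omega⟩ : Fin n) en).det with hD1def
  set D2 := (A.updateCol (⟨i - 2, by omega⟩ : Fin n) en).det with hD2def
  have hsign : (Un (i - 1) - w (i - 1)) * (Un i - w i) < 0 ↔ D1 * D2 < 0 := by
    have hk2 : (0:ℝ) < (C / A.det)^2 := by positivity
    have hp : (Un (i - 1) - w (i - 1)) * (Un i - w i) = (C / A.det)^2 * (D1 * D2) := by
      rw [hc1, hc2]; field_simp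
    rw [hp]
    constructor <;> intro hh <;> nlinarith [hk2]
  have hcr := cross_iff (x (i - 1)) (x i) (Un (i - 1) - w (i - 1)) (Un i - w i) hab
  refine ⟨by rw [hc1]; ring, ?_, ?_⟩
  · constructor
    · rintro ⟨h1, h2, t, ht, heq⟩
      rw [affInterp_sub _ _ _ _ _ _ _ hab.ne] at heq
      exact hsign.mp (hcr.mp ⟨h1, h2, t, ht, heq⟩)
    · intro hh
      obtain ⟨h1, h2, t, ht, heq⟩ := hcr.mpr (hsign.mpr hh)
      exact ⟨h1, h2, t, ht, (affInterp_sub _ _ _ _ _ _ _ hab.ne).mpr heq⟩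
  · intro hlt
    have hdlt : (Un (i - 1) - w (i - 1)) * (Un i - w i) < 0 := hsign.mpr hlt
    have hD1ne : D1 ≠ 0 := by
      intro h0; rw [h0] at hlt; simp at hlt
    have hratio : |(Un (i - 1) - w (i - 1)) / (Un i - w i)| = |D2 / D1| := by
      rw [hc1, hc2]
      congr 1
      field_simp
    obtain ⟨hmem, hz, huniq, hval⟩ :=
      cross_point (x (i - 1)) (x i) (Un (i - 1) - w (i - 1)) (Un i - w i) hab hdlt
    rw [hratio] at hmem hz huniq hval
    refine ⟨(|D2 / D1| * x i + x (i - 1)) / (|D2 / D1| + 1), hmem,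
      (affInterp_sub _ _ _ _ _ _ _ hab.ne).mpr hz, ?_, rfl, hval (Un (i - 1)) (Un i)⟩
    intro t' ht' heq'
    exact huniq t' ((affInterp_sub _ _ _ _ _ _ _ hab.ne).mp heq')
end
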